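/- Let a, b be real numbers with b < 0 and a > b. Define f(x) := (−b x² + (4b + 2a)x − 6(a + b))eˣ + a x² + (4a + 2b)x + 6(a + b). Then f(x) > 0 for all x > 0. -/

import Mathlib

open Real Set

noncomputable def f (a b x : ℝ) : ℝ :=
  (-b * x^2 + (4*b + 2*a) * x - 6*(a + b)) * Real.exp x
    + a * x^2 + (4*a + 2*b) * x + 6*(a + b)

lemma exp_taylor6 {x : ℝ} (hx : 0 ≤ x) :
    1 + x + x^2/2 + x^3/6 + x^4/24 + x^5/120 ≤ Real.exp x := by
  have h := Real.sum_le_exp_of_nonneg hx 6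
  simp [Finset.sum_range_succ, Nat.factorial] at h
  linarith [h]

-- H(x) = (x²-6x+12)e^x - (x²+6x+12) > 0 for x > 0
lemma H_pos {x : ℝ} (hx : 0 < x) :
    0 < (x^2 - 6*x + 12) * Real.exp x - (x^2 + 6*x + 12) := by
  have hT := exp_taylor6 hx.le
  have hq : 0 < x^2 - 6*x + 12 := by nlinarith [sq_nonneg (x - 3)]
  nlinarith [mul_le_mul_of_nonneg_left hT hq.le,
    mul_pos (pow_pos hx 5) (by nlinarith [sq_nonneg (x-1)] : (0:ℝ) < x^2 - x + 2)]

-- g''(x) = (2x-2)e^x + 2 > 0 for x > 0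
lemma g2_pos {x : ℝ} (hx : 0 < x) : 0 < (2*x - 2) * Real.exp x + 2 := by
  rcases le_or_gt 1 x with h | h
  · nlinarith [Real.exp_pos x]
  · have h2 : -x + 1 < Real.exp (-x) := by
      have := Real.add_one_lt_exp (x := -x) (by linarith)
      linarith
    have h3 : Real.exp (-x) * Real.exp x = 1 := by
      rw [← Real.exp_add]; simp
    nlinarith [Real.exp_pos x]

-- g'(x) = (2x-4)e^x + 2x + 4 > 0 for x > 0
lemma g1_pos {x : ℝ} (hx : 0 < x) : 0 < (2*x - 4) * Real.exp x + 2*x + 4 := by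
  have hd : ∀ y : ℝ, HasDerivAt (fun y : ℝ => (2*y - 4) * Real.exp y + (2*y + 4))
      ((2*y - 2) * Real.exp y + 2) y := by
    intro y
    have h1 : HasDerivAt (fun y : ℝ => 2*y - 4) 2 y := by
      simpa using ((hasDerivAt_id y).const_mul 2).sub_const 4
    have h2 := h1.mul (Real.hasDerivAt_exp y)
    have h3 : HasDerivAt (fun y : ℝ => 2*y + 4) 2 y := by
      simpa using ((hasDerivAt_id y).const_mul 2).add_const 4
    have h4 := h2.add h3
    have he : (2*y - 2) * Real.exp y + 2 = 2 * Real.exp y + (2*y - 4) * Real.exp y + 2 := by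
      ring
    rw [he]; exact h4
  have hm : StrictMonoOn (fun y : ℝ => (2*y - 4) * Real.exp y + (2*y + 4)) (Set.Ici 0) := by
    apply strictMonoOn_of_deriv_pos (convex_Ici 0)
    · exact Continuous.continuousOn (by continuity)
    · intro y hy
      rw [interior_Ici] at hy
      rw [(hd y).deriv]
      exact g2_pos hy
  have := hm (le_refl (0:ℝ)) hx.le hx
  simp only [Real.exp_zero] at this
  norm_num at this
  linarith

-- g(x) = (2x-6)e^x + x² + 4x + 6 > 0 for x > 0
lemma g_pos {x : ℝ} (hx : 0 < x) :
    0 < (2*x - 6) * Real.exp x + x^2 + 4*x + 6 := by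
  have hd : ∀ y : ℝ, HasDerivAt (fun y : ℝ => (2*y - 6) * Real.exp y + (y^2 + 4*y + 6))
      ((2*y - 4) * Real.exp y + 2*y + 4) y := by
    intro y
    have h1 : HasDerivAt (fun y : ℝ => 2*y - 6) 2 y := by
      simpa using ((hasDerivAt_id y).const_mul 2).sub_const 6
    have h2 := h1.mul (Real.hasDerivAt_exp y)
    have hp : HasDerivAt (fun y : ℝ => y^2) (2*y) y := by
      simpa using hasDerivAt_pow 2 y
    have h3 : HasDerivAt (fun y : ℝ => y^2 + 4*y + 6) (2*y + 4) y := by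
      have := (hp.add ((hasDerivAt_id y).const_mul 4)).add_const 6
      convert this using 1
      all_goals first | rfl | ring
    have h4 := h2.add h3
    have he : (2*y - 4) * Real.exp y + 2*y + 4
        = 2 * Real.exp y + (2*y - 6) * Real.exp y + (2*y + 4) := by ring
    rw [he]; exact h4
  have hm : StrictMonoOn (fun y : ℝ => (2*y - 6) * Real.exp y + (y^2 + 4*y + 6)) (Set.Ici 0) := by
    apply strictMonoOn_of_deriv_pos (convex_Ici 0)
    · exact Continuous.continuousOn (by continuity)
    · intro y hy
      rw [interior_Ici] at hy
      rw [(hd y).deriv]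
      exact g1_pos hy
  have := hm (le_refl (0:ℝ)) hx.le hx
  simp only [Real.exp_zero] at this
  norm_num at this
  linarith

theorem f_pos (a b : ℝ) (hb : b < 0) (hab : b < a) :
    ∀ x : ℝ, 0 < x → 0 < f a b x := by
  intro x hx
  have hg := g_pos hx
  have hH := H_pos hx
  have key : f a b x = (a - b) * ((2*x - 6) * Real.exp x + x^2 + 4*x + 6)
      + (-b) * ((x^2 - 6*x + 12) * Real.exp x - (x^2 + 6*x + 12)) := by
    unfold f; ring
  rw [key]
  have h1 : 0 < (a - b) := by linarith
  have h2 : 0 < -b := by linarith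
  positivity
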